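/- For a unit-speed spherical curve ξ = (x,y,z) with spherical angular momentum K(s) = x'y − xy', the identity z(s)² + z'(s)² + K(s)² = 1 holds for all s. -/
import Mathlib

open Real

/-- For a unit-speed spherical curve ξ = (x,y,z) with spherical angular
momentum K = x'y − xy', one has z² + z'² + K² = 1. -/
theorem z_sq_add_z_deriv_sq_add_momentum_sq_eq_one
    (x y z : ℝ → ℝ)
    (hx : Differentiable ℝ x) (hy : Differentiable ℝ y) (hz : Differentiable ℝ z)
    (hsphere : ∀ s, x s ^ 2 + y s ^ 2 + z s ^ 2 = 1)
    (hunit : ∀ s, deriv x s ^ 2 + deriv y s ^ 2 + deriv z s ^ 2 = 1)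
    (K : ℝ → ℝ)
    (hK : ∀ s, K s = deriv x s * y s - x s * deriv y s) :
    ∀ s, z s ^ 2 + deriv z s ^ 2 + K s ^ 2 = 1 := by
  have horth : ∀ s, x s * deriv x s + y s * deriv y s + z s * deriv z s = 0 := by
    intro s
    have h1 : deriv (fun t => x t ^ 2 + y t ^ 2 + z t ^ 2) s = 0 := by
      have heq : (fun t => x t ^ 2 + y t ^ 2 + z t ^ 2) = fun _ => (1 : ℝ) :=
        funext hsphere
      rw [heq]; simp
    have h2 : HasDerivAt (fun t => x t ^ 2 + y t ^ 2 + z t ^ 2)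
        (2 * x s ^ 1 * deriv x s + 2 * y s ^ 1 * deriv y s + 2 * z s ^ 1 * deriv z s) s := by
      exact (((hx s).hasDerivAt.pow 2).add ((hy s).hasDerivAt.pow 2)).add
        ((hz s).hasDerivAt.pow 2)
    have h3 := h2.deriv
    rw [h1] at h3
    nlinarith [h3]
  intro s
  rw [hK s]
  linear_combination (deriv x s ^ 2 + deriv y s ^ 2) * hsphere s +
    (1 - z s ^ 2) * hunit s -
    (x s * deriv x s + y s * deriv y s - z s * deriv z s) * horth s
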